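/- If there exists a projective plane of order k−1 (a family of k²−k+1 lines, each a k-subset of a (k²−k+1)-point set, any two lines meeting in exactly one point), then the lines form a clique of size k²−k+1 in J(k²−k+1, k, 1), and consequently α(J(k²−k+1, k, 1)) ≤ C(k²-k-1, k-2). -/

import Mathlib

open Finset

lemma perm_count {n k : ℕ} (l A : Finset (Fin n)) (hl : l.card = k) (hA : A.card = k) :
    Nat.factorial k * Nat.factorial (n - k) ≤
      (Finset.univ.filter (fun σ : Equiv.Perm (Fin n) => l.image σ = A)).card := by
  classical
  have hcard1 : Fintype.card {x : Fin n // x ∈ l} = k := by simp [hl]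
  have hcard2 : Fintype.card {x : Fin n // x ∈ A} = k := by simp [hA]
  have hcard3 : Fintype.card {x : Fin n // ¬ x ∈ l} = n - k := by
    simp [Fintype.card_subtype_compl, hcard1]
  have hcard4 : Fintype.card {x : Fin n // ¬ x ∈ A} = n - k := by
    simp [Fintype.card_subtype_compl, hcard2]
  set D := ({x : Fin n // x ∈ l} ≃ {x : Fin n // x ∈ A}) ×
    ({x : Fin n // ¬ x ∈ l} ≃ {x : Fin n // ¬ x ∈ A}) with hD
  have e1 : {x : Fin n // x ∈ l} ≃ {x : Fin n // x ∈ A} :=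
    Fintype.equivOfCardEq (by rw [hcard1, hcard2])
  have e2 : {x : Fin n // ¬ x ∈ l} ≃ {x : Fin n // ¬ x ∈ A} :=
    Fintype.equivOfCardEq (by rw [hcard3, hcard4])
  have hDcard : Fintype.card D = Nat.factorial k * Nat.factorial (n - k) := by
    simp only [hD]
    rw [Fintype.card_prod, Fintype.card_equiv e1, Fintype.card_equiv e2, hcard1, hcard3]
  set φ : D → Equiv.Perm (Fin n) := fun d => Equiv.subtypeCongr d.1 d.2 with hφ
  have happly : ∀ (d : D) (x : Fin n) (hx : x ∈ l), φ d x = (d.1 ⟨x, hx⟩ : Fin n) := by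
    intro d x hx
    simp [hφ, Equiv.subtypeCongr, hx]
  have happly2 : ∀ (d : D) (x : Fin n) (hx : ¬ x ∈ l), φ d x = (d.2 ⟨x, hx⟩ : Fin n) := by
    intro d x hx
    simp [hφ, Equiv.subtypeCongr, hx]
  have hmem : ∀ d : D, φ d ∈ Finset.univ.filter (fun σ : Equiv.Perm (Fin n) => l.image σ = A) := by
    intro d
    simp only [mem_filter, mem_univ, true_and]
    apply Finset.eq_of_subset_of_card_le
    · intro x hx
      simp only [Finset.mem_image] at hx
      obtain ⟨y, hy, rfl⟩ := hx
      rw [happly d y hy]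
      exact (d.1 ⟨y, hy⟩).2
    · rw [Finset.card_image_of_injective _ (Equiv.injective _), hl, hA]
  have hinj : Function.Injective φ := by
    intro d₁ d₂ h
    have h' : ∀ x, φ d₁ x = φ d₂ x := fun x => by rw [h]
    refine Prod.ext ?_ ?_
    · refine Equiv.ext fun y => Subtype.ext ?_
      have := h' y.1
      rw [happly d₁ y.1 y.2, happly d₂ y.1 y.2] at this
      exact this
    · refine Equiv.ext fun y => Subtype.ext ?_
      have := h' y.1
      rw [happly2 d₁ y.1 y.2, happly2 d₂ y.1 y.2] at this
      exact this
  calc Nat.factorial k * Nat.factorial (n - k) = Fintype.card D := hDcard.symm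
    _ ≤ _ := by
        rw [← Finset.card_univ (α := D)]
        exact Finset.card_le_card_of_injOn φ (fun d _ => hmem d) (hinj.injOn)

lemma choose_split (k : ℕ) (hk : 2 ≤ k) :
    Nat.choose (k ^ 2 - k + 1) k = (k ^ 2 - k + 1) * Nat.choose (k ^ 2 - k - 1) (k - 2) := by
  obtain ⟨k', rfl⟩ : ∃ k', k = k' + 2 := ⟨k - 2, by omega⟩
  have e : (k' + 2) ^ 2 = (k' + 2) * (k' + 1) + (k' + 2) := by ring
  have hb : 0 < (k' + 2) * (k' + 1) := by positivity
  obtain ⟨m, hm⟩ : ∃ m, (k' + 2) ^ 2 - (k' + 2) + 1 = m + 2 :=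
    ⟨(k' + 2) * (k' + 1) - 1, by rw [e]; omega⟩
  have hm1 : m + 1 = (k' + 2) * (k' + 1) := by rw [e] at hm; omega
  have h1 : (m + 2) * Nat.choose (m + 1) (k' + 1) =
      Nat.choose (m + 2) (k' + 2) * (k' + 2) := Nat.add_one_mul_choose_eq (m + 1) (k' + 1)
  have h2 : (m + 1) * Nat.choose m k' =
      Nat.choose (m + 1) (k' + 1) * (k' + 1) := Nat.add_one_mul_choose_eq m k'
  have key : Nat.choose (m + 2) (k' + 2) * ((k' + 2) * (k' + 1)) =
      (m + 2) * Nat.choose m k' * ((k' + 2) * (k' + 1)) := by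
    calc Nat.choose (m + 2) (k' + 2) * ((k' + 2) * (k' + 1))
        = Nat.choose (m + 2) (k' + 2) * (k' + 2) * (k' + 1) := by ring
      _ = (m + 2) * Nat.choose (m + 1) (k' + 1) * (k' + 1) := by rw [← h1]
      _ = (m + 2) * (Nat.choose (m + 1) (k' + 1) * (k' + 1)) := by ring
      _ = (m + 2) * ((m + 1) * Nat.choose m k') := by rw [← h2]
      _ = (m + 2) * Nat.choose m k' * (m + 1) := by ring
      _ = (m + 2) * Nat.choose m k' * ((k' + 2) * (k' + 1)) := by rw [hm1]
  have hpos : 0 < (k' + 2) * (k' + 1) := by positivity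
  have hmain := Nat.eq_of_mul_eq_mul_right hpos key
  have h4 : (k' + 2) ^ 2 - (k' + 2) - 1 = m := by omega
  have h5 : k' + 2 - 2 = k' := by omega
  rw [hm, h4, h5]
  exact hmain

/-- The Johnson graph J(n,k,1). -/
def johnsonGraph (n k : ℕ) : SimpleGraph {s : Finset (Fin n) // s.card = k} :=
  SimpleGraph.fromRel (fun x y => ((x : Finset (Fin n)) ∩ y).card = 1)

theorem stmt_17 (k : ℕ) (hk : 2 ≤ k)
    (L : Finset (Finset (Fin (k ^ 2 - k + 1))))
    (hL : L.card = k ^ 2 - k + 1)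
    (hlines : ∀ l ∈ L, l.card = k)
    (hmeet : ∀ l₁ ∈ L, ∀ l₂ ∈ L, l₁ ≠ l₂ → (l₁ ∩ l₂).card = 1) :
    (∃ C : Finset {s : Finset (Fin (k ^ 2 - k + 1)) // s.card = k},
        C.card = k ^ 2 - k + 1 ∧
        (∀ a ∈ C, (a : Finset (Fin (k ^ 2 - k + 1))) ∈ L) ∧
        ∀ a ∈ C, ∀ b ∈ C, a ≠ b → (johnsonGraph (k ^ 2 - k + 1) k).Adj a b) ∧
    ∀ F : Finset (Finset (Fin (k ^ 2 - k + 1))),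
      (∀ s ∈ F, s.card = k) →
      (∀ A ∈ F, ∀ B ∈ F, (A ∩ B).card ≠ 1) →
      F.card ≤ Nat.choose (k ^ 2 - k - 1) (k - 2) := by
  classical
  have hsq : k ^ 2 = k * k := sq k
  have hkk : 2 * k ≤ k * k := Nat.mul_le_mul_right k hk
  have hkn : k ≤ k ^ 2 - k + 1 := by omega
  have hinjC : Function.Injective
      (fun x : {l // l ∈ L} =>
        (⟨x.1, hlines x.1 x.2⟩ : {s : Finset (Fin (k ^ 2 - k + 1)) // s.card = k})) := by
    intro a b h
    simp only [Subtype.mk.injEq] at h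
    exact Subtype.ext h
  constructor
  · -- the clique
    set C : Finset {s : Finset (Fin (k ^ 2 - k + 1)) // s.card = k} :=
      L.attach.map ⟨_, hinjC⟩ with hC
    have hCmem : ∀ a ∈ C, (a : Finset (Fin (k ^ 2 - k + 1))) ∈ L := by
      intro a ha
      rw [hC, Finset.mem_map] at ha
      obtain ⟨x, _, rfl⟩ := ha
      exact x.2
    refine ⟨C, ?_, hCmem, ?_⟩
    · rw [hC, Finset.card_map, Finset.card_attach, hL]
    · intro a ha b hb hab
      rw [johnsonGraph, SimpleGraph.fromRel_adj]
      exact ⟨hab, Or.inl (hmeet a.1 (hCmem a ha) b.1 (hCmem b hb)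
        (fun h => hab (Subtype.ext h)))⟩
  · -- the bound
    intro F hFcard hFint
    set M : ℕ := ∑ σ : Equiv.Perm (Fin (k ^ 2 - k + 1)),
      (L.filter (fun l => l.image σ ∈ F)).card with hM
    have hupper : M ≤ Nat.factorial (k ^ 2 - k + 1) := by
      rw [← Fintype.card_fin (k ^ 2 - k + 1), ← Fintype.card_perm, ← Finset.card_univ,
        Finset.card_eq_sum_ones, hM]
      apply Finset.sum_le_sum
      intro σ _
      apply Finset.card_le_one.mpr
      intro a ha b hb
      rw [Finset.mem_filter] at ha hb
      by_contra hab
      apply hFint _ ha.2 _ hb.2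
      rw [← Finset.image_inter _ _ (Equiv.injective σ),
        Finset.card_image_of_injective _ (Equiv.injective σ)]
      exact hmeet a ha.1 b hb.1 hab
    have hlower : F.card * (Nat.factorial k * Nat.factorial (k ^ 2 - k + 1 - k)) * L.card
        ≤ M := by
      have hswap : M = ∑ l ∈ L,
          (Finset.univ.filter
            (fun σ : Equiv.Perm (Fin (k ^ 2 - k + 1)) => l.image σ ∈ F)).card := by
        simp only [hM, Finset.card_filter]
        rw [Finset.sum_comm]
      rw [hswap]
      have hstep : ∀ l ∈ L, F.card * (Nat.factorial k * Nat.factorial (k ^ 2 - k + 1 - k)) ≤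
          (Finset.univ.filter
            (fun σ : Equiv.Perm (Fin (k ^ 2 - k + 1)) => l.image σ ∈ F)).card := by
        intro l hl
        have hsplit : Finset.univ.filter
            (fun σ : Equiv.Perm (Fin (k ^ 2 - k + 1)) => l.image σ ∈ F) =
            F.biUnion (fun A => Finset.univ.filter
              (fun σ : Equiv.Perm (Fin (k ^ 2 - k + 1)) => l.image σ = A)) := by
          ext σ
          simp only [Finset.mem_filter, Finset.mem_univ, true_and, Finset.mem_biUnion]
          constructor
          · intro h; exact ⟨l.image σ, h, rfl⟩
          · rintro ⟨A, hA, rfl⟩; exact hA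
        rw [hsplit, Finset.card_biUnion]
        · calc F.card * (Nat.factorial k * Nat.factorial (k ^ 2 - k + 1 - k))
              = ∑ _A ∈ F, Nat.factorial k * Nat.factorial (k ^ 2 - k + 1 - k) := by
                rw [Finset.sum_const, smul_eq_mul]
            _ ≤ _ := Finset.sum_le_sum (fun A hA =>
                perm_count l A (hlines l hl) (hFcard A hA))
        · intro A hA B hB hAB
          simp only [Function.onFun]; rw [Finset.disjoint_left]
          intro σ hσA hσB
          rw [Finset.mem_filter] at hσA hσB
          exact hAB (hσA.2 ▸ hσB.2.symm ▸ rfl)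
      calc F.card * (Nat.factorial k * Nat.factorial (k ^ 2 - k + 1 - k)) * L.card
          = ∑ _l ∈ L, F.card * (Nat.factorial k * Nat.factorial (k ^ 2 - k + 1 - k)) := by
            rw [Finset.sum_const, smul_eq_mul, mul_comm]
        _ ≤ _ := Finset.sum_le_sum hstep
    -- arithmetic
    have hchoose := choose_split k hk
    have hfact : Nat.choose (k ^ 2 - k + 1) k * Nat.factorial k
        * Nat.factorial (k ^ 2 - k + 1 - k) = Nat.factorial (k ^ 2 - k + 1) :=
      Nat.choose_mul_factorial_mul_factorial hkn
    have hfk := Nat.factorial_pos k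
    have hfnk := Nat.factorial_pos (k ^ 2 - k + 1 - k)
    have hXpos : 0 < Nat.factorial k * Nat.factorial (k ^ 2 - k + 1 - k) * (k ^ 2 - k + 1) := by
      positivity
    have hfin : F.card * (Nat.factorial k * Nat.factorial (k ^ 2 - k + 1 - k) * (k ^ 2 - k + 1))
        ≤ Nat.choose (k ^ 2 - k - 1) (k - 2)
          * (Nat.factorial k * Nat.factorial (k ^ 2 - k + 1 - k) * (k ^ 2 - k + 1)) := by
      calc F.card * (Nat.factorial k * Nat.factorial (k ^ 2 - k + 1 - k) * (k ^ 2 - k + 1))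
          = F.card * (Nat.factorial k * Nat.factorial (k ^ 2 - k + 1 - k)) * L.card := by
            rw [hL]; ring
        _ ≤ M := hlower
        _ ≤ Nat.factorial (k ^ 2 - k + 1) := hupper
        _ = Nat.choose (k ^ 2 - k + 1) k * Nat.factorial k
            * Nat.factorial (k ^ 2 - k + 1 - k) := hfact.symm
        _ = Nat.choose (k ^ 2 - k - 1) (k - 2)
            * (Nat.factorial k * Nat.factorial (k ^ 2 - k + 1 - k) * (k ^ 2 - k + 1)) := by
            rw [hchoose]; ring
    exact Nat.le_of_mul_le_mul_left
      (by rwa [mul_comm (F.card), mul_comm (Nat.choose (k ^ 2 - k - 1) (k - 2))] at hfin) hXpos
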